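/- Let G = ℤ/2ℤ and let 0 → Q → P →^φ ℤ → 0 be an exact sequence of G-modules with trivial action on ℤ, where Q is the free ℤ-module with basis F, F₁′, …, F_{2g+2}′ and involution δ(F) = F, δ(F_i′) = F − F_i′, and suppose φ(P^G) = 2ℤ. Then H¹(G, P) ≅ (ℤ/2ℤ)^{2g}. -/

import Mathlib

open groupCohomology

set_option maxHeartbeats 1000000 in
/-- Let `G = ℤ/2ℤ = ⟨δ⟩` and `0 → Q → P → ℤ → 0` an exact sequence of `G`-modules with
trivial action on `ℤ`, where `Q` is the free `ℤ`-module with basis `F, F₁', …, F_{2g+2}'`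
(modelled as `ℤ × (Fin (2g+2) → ℤ)`) and involution `δ(F) = F`, `δ(Fᵢ') = F - Fᵢ'`,
and suppose the image of `P^G` in `ℤ` is `2ℤ`.  Then `H¹(G, P) ≅ (ℤ/2ℤ)^{2g}`. -/
theorem de_jonquieres_h1_of_P (g : ℕ) (hg : 1 ≤ g)
    (G : Type) [Group G] [Fintype G] (hcard : Fintype.card G = 2)
    (δ : G) (hgen : ∀ x : G, x ∈ Subgroup.zpowers δ)
    (P : Type) [AddCommGroup P] [Module ℤ P]
    (ρQ : Representation ℤ G (ℤ × (Fin (2 * g + 2) → ℤ)))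
    (hρQ : ∀ x : ℤ × (Fin (2 * g + 2) → ℤ), ρQ δ x = (x.1 + ∑ i, x.2 i, -x.2))
    (ρP : Representation ℤ G P)
    (i : (ℤ × (Fin (2 * g + 2) → ℤ)) →ₗ[ℤ] P) (hi : Function.Injective i)
    (hiequiv : ∀ g' : G, ∀ x, i (ρQ g' x) = ρP g' (i x))
    (φ : P →ₗ[ℤ] ℤ) (hφ : Function.Surjective φ)
    (hφequiv : ∀ g' : G, ∀ x : P, φ (ρP g' x) = φ x)
    (hexact : LinearMap.range i = LinearMap.ker φ)
    (himg : Submodule.map φ ρP.invariants = Submodule.span ℤ {(2 : ℤ)}) :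
    Nonempty (H1 (Rep.of ρP) ≃+ (Fin (2 * g) → ZMod 2)) := by
  classical
  set A : Rep ℤ G := Rep.of ρP with hA
  -- group facts
  have hδ1 : δ ≠ 1 := by
    rintro rfl
    have h1 : ∀ x : G, x = 1 := by
      intro x
      obtain ⟨n, rfl⟩ := hgen x
      simp
    have : Fintype.card G ≤ 1 := Fintype.card_le_one_iff.2 fun a b => (h1 a).trans (h1 b).symm
    omega
  have hx2 : ∀ x : G, x * x = 1 := by
    intro x
    have := pow_card_eq_one (x := x)
    rwa [hcard, pow_two] at this
  have hδδ : δ * δ = 1 := hx2 δ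
  have hGcases : ∀ x : G, x = 1 ∨ x = δ := by
    intro x
    by_contra h
    push_neg at h
    have hsub : ({1, x, δ} : Finset G).card ≤ 2 := hcard ▸ Finset.card_le_univ _
    rw [Finset.card_insert_of_notMem (by simp [Ne.symm h.1, Ne.symm hδ1]),
      Finset.card_insert_of_notMem (by simp [h.2]), Finset.card_singleton] at hsub
    omega
  have hρδδ : ∀ x : P, ρP δ (ρP δ x) = x := by
    intro x
    have : ρP δ * ρP δ = 1 := by rw [← map_mul, hδδ, map_one]
    calc ρP δ (ρP δ x) = (ρP δ * ρP δ) x := rfl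
    _ = x := by rw [this]; rfl
  -- splitting data
  obtain ⟨e, he⟩ := hφ 1
  have hpre : ∀ x : P, φ x = 0 → i (Function.invFun i x) = x := by
    intro x hx
    have : x ∈ LinearMap.range i := by rw [hexact]; exact hx
    obtain ⟨u, hu⟩ := this
    rw [← hu, Function.leftInverse_invFun hi u]
  have hσi : ∀ u, Function.invFun i (i u) = u := Function.leftInverse_invFun hi
  have hφδ0 : φ (ρP δ e - e) = 0 := by rw [map_sub, hφequiv, sub_self]
  set q₀ := Function.invFun i (ρP δ e - e) with hq₀def
  have hq₀ : i q₀ = ρP δ e - e := hpre _ hφδ0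
  -- kernel of 1 + δ on Q
  have hker : ∀ x : ℤ × (Fin (2 * g + 2) → ℤ),
      (ρP δ (i x) + i x = 0 ↔ 2 * x.1 + ∑ k, x.2 k = 0) := by
    intro x
    have h1 : ρP δ (i x) + i x = i (ρQ δ x + x) := by rw [map_add, hiequiv]
    have h2 : ρQ δ x + x = ((2 * x.1 + ∑ k, x.2 k, 0) : ℤ × (Fin (2 * g + 2) → ℤ)) := by
      rw [hρQ]
      ext <;> simp <;> ring
    rw [h1, h2]
    constructor
    · intro h
      have := hi (h.trans (map_zero i).symm)
      exact congrArg Prod.fst this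
    · intro h
      rw [Prod.ext_iff] at *
      simp_all
  have hq₀ker : ρP δ (i q₀) + i q₀ = 0 := by
    rw [hq₀]
    have := hρδδ e
    simp only [map_sub]
    rw [this]
    abel
  have ha₀ : 2 * q₀.1 + ∑ k, q₀.2 k = 0 := (hker q₀).1 hq₀ker
  have hZ2 : ∀ x : ZMod 2, x = 0 ∨ x = 1 := by decide
  have hsumv₀ : ∑ k, ((q₀.2 k : ZMod 2)) = 0 := by
    have : ((2 * q₀.1 + ∑ k, q₀.2 k : ℤ) : ZMod 2) = 0 := by rw [ha₀]; simp
    push_cast at this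
    rw [show ((2 : ZMod 2)) = 0 by decide] at this
    simpa using this
  -- existence of an odd coordinate of v₀
  have hoddj : ∃ j, ((q₀.2 j : ZMod 2)) = 1 := by
    by_contra h
    push_neg at h
    have heven : ∀ k, (2 : ℤ) ∣ q₀.2 k := by
      intro k
      have := (hZ2 (q₀.2 k : ZMod 2)).resolve_right (h k)
      exact (ZMod.intCast_zmod_eq_zero_iff_dvd _ 2).1 this
    choose w hw using heven
    have hsw : 2 * ∑ k, w k = ∑ k, q₀.2 k := by
      rw [Finset.mul_sum]; exact Finset.sum_congr rfl fun k _ => (hw k).symm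
    have h2 : q₀ + ρQ δ ((0 : ℤ), w) = ((0 : ℤ), w) := by
      rw [hρQ]
      refine Prod.ext ?_ (funext fun k => ?_)
      · simp only [Prod.fst_add]
        omega
      · simp only [Prod.snd_add, Pi.add_apply, Pi.neg_apply]
        have := hw k
        omega
    have hkey : ρP δ (e + i ((0 : ℤ), w)) = e + i ((0 : ℤ), w) := by
      rw [map_add, ← hiequiv]
      rw [show ρP δ e = e + i q₀ from by rw [hq₀]; abel]
      rw [add_assoc, ← map_add, h2]
    have hinv : e + i ((0 : ℤ), w) ∈ ρP.invariants := by
      rw [Representation.mem_invariants]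
      intro x
      rcases hGcases x with rfl | rfl
      · simp
      · exact hkey
    have h1mem : (1 : ℤ) ∈ Submodule.span ℤ {(2 : ℤ)} := by
      rw [← himg]
      exact ⟨e + i (0, w), hinv, by
        have : φ (i (0, w)) = 0 := by
          have : i (0, w) ∈ LinearMap.ker φ := hexact ▸ LinearMap.mem_range_self i _
          exact this
        rw [map_add, he, this, add_zero]⟩
    rw [Submodule.mem_span_singleton] at h1mem
    obtain ⟨c, hc⟩ := h1mem
    simp only [smul_eq_mul] at hc
    omega
  obtain ⟨j, hj⟩ := hoddj
  -- a second odd coordinate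
  have hoddj' : ∃ j', j' ≠ j ∧ ((q₀.2 j' : ZMod 2)) = 1 := by
    have hjmem : j ∈ Finset.univ := Finset.mem_univ j
    have hsum' : ∑ k ∈ Finset.univ.erase j, ((q₀.2 k : ZMod 2)) = 1 := by
      have := Finset.add_sum_erase Finset.univ (fun k => ((q₀.2 k : ZMod 2))) hjmem
      rw [hsumv₀] at this
      rw [hj] at this
      have h01 := hZ2 (∑ k ∈ Finset.univ.erase j, ((q₀.2 k : ZMod 2)))
      rcases h01 with h01 | h01
      · rw [h01] at this; exact absurd this (by decide)
      · exact h01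
    have hne : ∑ k ∈ Finset.univ.erase j, ((q₀.2 k : ZMod 2)) ≠ 0 := by
      rw [hsum']; decide
    obtain ⟨j', hj'mem, hj'ne⟩ := Finset.exists_ne_zero_of_sum_ne_zero hne
    exact ⟨j', (Finset.mem_erase.1 hj'mem).1, (hZ2 _).resolve_left hj'ne⟩
  obtain ⟨j', hjj', hj'⟩ := hoddj'
  set s : Finset (Fin (2 * g + 2)) := (Finset.univ.erase j).erase j' with hs
  have hj's : j' ∈ Finset.univ.erase j := Finset.mem_erase.2 ⟨hjj', Finset.mem_univ _⟩
  have hscard : s.card = 2 * g := by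
    rw [hs, Finset.card_erase_of_mem hj's, Finset.card_erase_of_mem (Finset.mem_univ _),
      Finset.card_univ, Fintype.card_fin]
    omega
  have hsplit : ∀ {M : Type} [AddCommMonoid M] (f : Fin (2 * g + 2) → M),
      ∑ k, f k = f j + f j' + ∑ k ∈ s, f k := by
    intro M _ f
    rw [hs, add_assoc, Finset.add_sum_erase _ f hj's, Finset.add_sum_erase _ f (Finset.mem_univ j)]
  have hjs : j ∉ s := by simp [hs]
  have hj's' : j' ∉ s := by simp [hs]
  have hκcard : Fintype.card ↥s = 2 * g := by rw [Fintype.card_coe]; exact hscard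
  set κ : ↥s ≃ Fin (2 * g) := Fintype.equivFinOfCardEq hκcard with hκ
  set π : (ℤ × (Fin (2 * g + 2) → ℤ)) → (Fin (2 * g) → ZMod 2) :=
    fun x k => ((x.2 ↑(κ.symm k) : ZMod 2)) + (x.2 j : ZMod 2) * (q₀.2 ↑(κ.symm k) : ZMod 2)
    with hπdef
  have hπadd : ∀ x y, π (x + y) = π x + π y := by
    intro x y
    funext k
    simp only [hπdef, Prod.snd_add, Pi.add_apply]
    push_cast
    ring
  -- basic cocycle facts
  set fd : cocycles₁ A → P := (fun f => f δ) with hfd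
  have hfdadd : ∀ f f' : cocycles₁ A, fd (f + f') = fd f + fd f' := fun f f' => rfl
  have hfδker : ∀ f : cocycles₁ A, ρP δ (fd f) + fd f = 0 := by
    intro f
    have h1 := (mem_cocycles₁_iff (A := A) f).1 f.2 δ δ
    rw [hδδ] at h1
    have h2 : (f : G → A) 1 = 0 := cocycles₁_map_one f
    rw [h2] at h1
    exact h1.symm
  have hφfδ : ∀ f : cocycles₁ A, φ (fd f) = 0 := by
    intro f
    have h1 := congrArg φ (hfδker f)
    rw [map_add, map_zero, hφequiv] at h1
    omega
  have hifδ : ∀ f : cocycles₁ A, i (Function.invFun (⇑i) (fd f)) = fd f := fun f =>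
    hpre _ (hφfδ f)
  have hker2 : ∀ f : cocycles₁ A,
      2 * (Function.invFun (⇑i) (fd f)).1 + ∑ k, (Function.invFun (⇑i) (fd f)).2 k = 0 := by
    intro f
    refine (hker _).1 ?_
    rw [hifδ f]
    exact hfδker f
  -- the linear map θ from cocycles
  set θfun : cocycles₁ A → (Fin (2 * g) → ZMod 2) :=
    fun f => π (Function.invFun (⇑i) (fd f)) with hθfun
  have hθadd : ∀ f f' : cocycles₁ A, θfun (f + f') = θfun f + θfun f' := by
    intro f f'
    have hσadd : Function.invFun (⇑i) (fd (f + f'))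
        = Function.invFun (⇑i) (fd f) + Function.invFun (⇑i) (fd f') := by
      apply hi
      rw [map_add, hifδ, hifδ, hifδ, hfdadd]
    rw [hθfun]
    simp only
    rw [hσadd, hπadd]
  set θ' : cocycles₁ A →+ (Fin (2 * g) → ZMod 2) := AddMonoidHom.mk' θfun hθadd with hθ'
  -- coboundary computation
  have hcob : ∀ (u : ℤ × (Fin (2 * g + 2) → ℤ)) (c : ℤ),
      ρP δ (i u + c • e) - (i u + c • e) = i (ρQ δ u - u + c • q₀) := by
    intro u c
    rw [map_add, map_zsmul, ← hiequiv,
      show ρP δ e = e + i q₀ from by rw [hq₀]; abel,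
      zsmul_add, map_add, map_sub, map_zsmul]
    abel
  have hcomp2 : ∀ (u : ℤ × (Fin (2 * g + 2) → ℤ)) (c : ℤ) (k : Fin (2 * g + 2)),
      (ρQ δ u - u + c • q₀).2 k = -(2 * u.2 k) + c * q₀.2 k := by
    intro u c k
    rw [hρQ]
    norm_num
    try ring
  have hcomp1 : ∀ (u : ℤ × (Fin (2 * g + 2) → ℤ)) (c : ℤ),
      (ρQ δ u - u + c • q₀).1 = (∑ k, u.2 k) + c * q₀.1 := by
    intro u c
    rw [hρQ]
    norm_num
    try ring
  have h2Z : (2 : ZMod 2) = 0 := by decide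
  -- coboundaries are sent to zero
  have hbound : ∀ f : cocycles₁ A, ⇑f ∈ coboundaries₁ A → θfun f = 0 := by
    intro f hf
    obtain ⟨p, hp0⟩ := hf
    have hp : ∀ g' : G, A.ρ g' p - p = f g' := fun g' => congrFun hp0 g'
    set pP : P := p with hpP
    have hp' : φ (pP - φ pP • e) = 0 := by
      rw [map_sub, map_zsmul, he]
      norm_num
    set u : ℤ × (Fin (2 * g + 2) → ℤ) := Function.invFun (⇑i) (pP - φ pP • e) with hudef
    have hu : i u = pP - φ pP • e := hpre _ hp'
    have hpu : pP = i u + φ pP • e := by rw [hu]; abel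
    have hfδ : fd f = i (ρQ δ u - u + φ pP • q₀) := by
      rw [← hcob, ← hpu]
      exact (hp δ).symm
    have hσfδ : Function.invFun (⇑i) (fd f) = ρQ δ u - u + φ pP • q₀ := by
      rw [hfδ, hσi]
    show π (Function.invFun (⇑i) (fd f)) = 0
    rw [hσfδ]
    funext k
    show ((ρQ δ u - u + φ pP • q₀).2 ↑(κ.symm k) : ZMod 2)
        + ((ρQ δ u - u + φ pP • q₀).2 j : ZMod 2) * (q₀.2 ↑(κ.symm k) : ZMod 2) = 0
    rw [hcomp2, hcomp2]
    push_cast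
    rw [hj]
    have hZident : ∀ a b n q : ZMod 2, (-(2 * a) + n * q) + (-(2 * b) + n * 1) * q = 0 := by decide
    exact hZident _ _ _ _
  -- kernel of θ is the coboundaries
  have hkerθ : ∀ f : cocycles₁ A, θfun f = 0 → ⇑f ∈ coboundaries₁ A := by
    intro f hf0
    set x := Function.invFun (⇑i) (fd f) with hxdef
    have hxsum : 2 * x.1 + ∑ k, x.2 k = 0 := hker2 f
    set wb : Fin (2 * g + 2) → ZMod 2 :=
      fun m => (x.2 m : ZMod 2) + (x.2 j : ZMod 2) * (q₀.2 m : ZMod 2) with hwbdef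
    have hwbs : ∀ m (hm : m ∈ s), wb m = 0 := by
      intro m hm
      have h1 : π x (κ ⟨m, hm⟩) = 0 := congrFun hf0 (κ ⟨m, hm⟩)
      have h2 : wb ↑(κ.symm (κ ⟨m, hm⟩)) = 0 := h1
      rwa [Equiv.symm_apply_apply] at h2
    have hwbj : wb j = 0 := by
      show (x.2 j : ZMod 2) + (x.2 j : ZMod 2) * (q₀.2 j : ZMod 2) = 0
      rw [hj]
      have h : ∀ a : ZMod 2, a + a * 1 = 0 := by decide
      exact h _
    have hsumx : ∑ m, ((x.2 m : ZMod 2)) = 0 := by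
      have h : ((2 * x.1 + ∑ k, x.2 k : ℤ) : ZMod 2) = 0 := by rw [hxsum]; simp
      push_cast at h
      rw [h2Z] at h
      simpa using h
    have hsumwb : ∑ m, wb m = 0 := by
      show ∑ m, ((x.2 m : ZMod 2) + (x.2 j : ZMod 2) * (q₀.2 m : ZMod 2)) = 0
      rw [Finset.sum_add_distrib, ← Finset.mul_sum, hsumx, hsumv₀]
      ring
    have hwbj' : wb j' = 0 := by
      have h1 := (hsplit wb).symm.trans hsumwb
      rw [hwbj, Finset.sum_eq_zero hwbs] at h1
      simpa using h1
    have hwb0 : ∀ m, wb m = 0 := by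
      intro m
      by_cases h1 : m = j
      · rw [h1]; exact hwbj
      by_cases h2 : m = j'
      · rw [h2]; exact hwbj'
      exact hwbs m (by rw [hs]; exact Finset.mem_erase.2 ⟨h2, Finset.mem_erase.2 ⟨h1, Finset.mem_univ m⟩⟩)
    have hdvd : ∀ m, (2 : ℤ) ∣ (x.2 j * q₀.2 m - x.2 m) := by
      intro m
      have hthis : (x.2 m : ZMod 2) + (x.2 j : ZMod 2) * (q₀.2 m : ZMod 2) = 0 := hwb0 m
      apply (ZMod.intCast_zmod_eq_zero_iff_dvd _ 2).1
      push_cast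
      revert hthis
      generalize (x.2 m : ZMod 2) = a
      generalize (x.2 j : ZMod 2) = b
      generalize (q₀.2 m : ZMod 2) = cc
      revert a b cc
      decide
    choose u2 hu2 using hdvd
    have hs2 : 2 * ∑ m, u2 m = x.2 j * ∑ m, q₀.2 m - ∑ m, x.2 m := by
      rw [Finset.mul_sum, Finset.mul_sum, ← Finset.sum_sub_distrib]
      exact Finset.sum_congr rfl fun m _ => (hu2 m).symm
    have hsum_u2 : (∑ m, u2 m) + x.2 j * q₀.1 = x.1 := by
      have h1 : 2 * ∑ m, u2 m = 2 * (x.1 - x.2 j * q₀.1) := by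
        rw [hs2]
        rw [show ∑ m, q₀.2 m = -(2 * q₀.1) from by linarith [ha₀]]
        rw [show ∑ m, x.2 m = -(2 * x.1) from by linarith [hxsum]]
        ring
      have h2 := mul_left_cancel₀ (two_ne_zero (α := ℤ)) h1
      linarith [h2]
    have hQeq : ρQ δ ((0 : ℤ), u2) - ((0 : ℤ), u2) + x.2 j • q₀ = x := by
      refine Prod.ext ?_ (funext fun m => ?_)
      · rw [hcomp1]
        simpa using hsum_u2
      · rw [hcomp2]
        have := hu2 m
        linarith
    set pw : P := i ((0 : ℤ), u2) + x.2 j • e with hpw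
    have hcase1 : ρP 1 pw - pw = (0 : P) := by rw [map_one, Module.End.one_apply, sub_self]
    have hcaseδ : ρP δ pw - pw = fd f := by
      rw [hpw, hcob, hQeq]
      exact hifδ f
    refine ⟨pw, funext ?_⟩
    intro g'
    show ρP g' pw - pw = f g'
    rcases hGcases g' with rfl | rfl
    · exact hcase1.trans (cocycles₁_map_one f).symm
    · exact hcaseδ
  -- surjectivity of θ
  have hZz : ∀ z : ZMod 2, 0 + z + z = 0 := by decide
  have hsurj : ∀ t : Fin (2 * g) → ZMod 2, ∃ f : cocycles₁ A, θfun f = t := by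
    intro t
    set wb : Fin (2 * g + 2) → ZMod 2 :=
      fun m => if hm : m ∈ s then t (κ ⟨m, hm⟩) else if m = j then 0 else ∑ k, t k with hwbdef
    have hwbj : wb j = 0 := by rw [hwbdef]; simp [hjs]
    have hwbj' : wb j' = ∑ k, t k := by rw [hwbdef]; simp [hj's', hjj']
    have hwbs : ∀ m (hm : m ∈ s), wb m = t (κ ⟨m, hm⟩) := by
      intro m hm; rw [hwbdef]; simp [hm]
    set v : Fin (2 * g + 2) → ℤ := fun m => ((wb m).val : ℤ) with hvdef
    have hvc : ∀ m, ((v m : ZMod 2)) = wb m := by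
      intro m
      rw [hvdef]
      push_cast
      simp [ZMod.natCast_val, ZMod.cast_id]
    have hsumwb : ∑ m, wb m = 0 := by
      rw [hsplit wb, hwbj, hwbj']
      have h1 : ∑ m ∈ s, wb m = ∑ m ∈ s.attach, wb ↑m := (Finset.sum_attach s wb).symm
      have h2 : ∑ m ∈ s.attach, wb ↑m = ∑ m ∈ s.attach, t (κ m) :=
        Finset.sum_congr rfl fun m _ => hwbs ↑m m.2
      have h3 : ∑ m ∈ s.attach, t (κ m) = ∑ k, t k := by
        rw [← Finset.univ_eq_attach]
        exact Equiv.sum_comp κ t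
      rw [h1, h2, h3]
      exact hZz _
    have hdvdv : (2 : ℤ) ∣ ∑ m, v m := by
      apply (ZMod.intCast_zmod_eq_zero_iff_dvd _ 2).1
      push_cast
      rw [show ∑ m, ((v m : ZMod 2)) = ∑ m, wb m from Finset.sum_congr rfl fun m _ => hvc m]
      exact hsumwb
    obtain ⟨a', ha'⟩ := hdvdv
    set x0 : P := i (-a', v) with hx0def
    have hx0ker : ρP δ x0 + x0 = 0 := (hker _).2 (by simp only; linarith [ha'])
    set fc : G → P := fun g' => if g' = δ then x0 else 0 with hfcdef
    have hfc1 : fc 1 = 0 := if_neg (fun h => hδ1 h.symm)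
    have hfcδ : fc δ = x0 := if_pos rfl
    have hfcmemP : ∀ g1 g2 : G, fc (g1 * g2) = ρP g1 (fc g2) + fc g1 := by
      intro g1 g2
      rcases hGcases g1 with rfl | rfl <;> rcases hGcases g2 with rfl | rfl
      · rw [one_mul, hfc1, map_zero, add_zero]
      · rw [one_mul, hfc1, map_one, Module.End.one_apply, add_zero]
      · rw [mul_one, hfc1, map_zero, zero_add]
      · rw [hδδ, hfc1, hfcδ]
        exact hx0ker.symm
    have hfcmem : fc ∈ cocycles₁ A := (mem_cocycles₁_iff (A := A) fc).2 hfcmemP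
    refine ⟨⟨fc, hfcmem⟩, ?_⟩
    have hfdfc : fd ⟨fc, hfcmem⟩ = i (-a', v) := hfcδ
    have hinv : Function.invFun (⇑i) (fd ⟨fc, hfcmem⟩) = (-a', v) := by
      rw [hfdfc, hσi]
    show π (Function.invFun (⇑i) (fd ⟨fc, hfcmem⟩)) = t
    rw [hinv]
    funext k
    show ((v ↑(κ.symm k) : ZMod 2)) + (v j : ZMod 2) * (q₀.2 ↑(κ.symm k) : ZMod 2) = t k
    rw [hvc, hvc, hwbj, hwbs ↑(κ.symm k) (κ.symm k).2]
    simp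
  -- assemble the isomorphism
  set π1 : cocycles₁ A →+ H1 A := (H1π A).hom.toAddMonoidHom with hπ1
  have hπsurj : Function.Surjective π1 := fun h =>
    H1_induction_on h fun f => ⟨f, rfl⟩
  have hθsurj : Function.Surjective θ' := fun t => hsurj t
  have hkereq : π1.ker = θ'.ker := by
    ext f
    rw [AddMonoidHom.mem_ker, AddMonoidHom.mem_ker]
    change H1π A f = 0 ↔ θfun f = 0
    rw [H1π_eq_zero_iff]
    exact ⟨hbound f, hkerθ f⟩
  exact ⟨(QuotientAddGroup.quotientKerEquivOfSurjective π1 hπsurj).symm.trans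
    ((QuotientAddGroup.quotientAddEquivOfEq hkereq).trans
      (QuotientAddGroup.quotientKerEquivOfSurjective θ' hθsurj))⟩
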